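/- There is an automorphism of the character table of the symmetric group S₄ that does not correspond to any group automorphism: there exist a bijection α of the set of conjugacy classes of S₄ and a bijection β of the set of irreducible complex characters of S₄ such that β(χ)(α(C)) = χ(C) for every irreducible character χ and every conjugacy class C, and α maps the conjugacy class of a transposition (class 2A) to the conjugacy class of a 4-cycle (class 4A); in particular α is not induced by any automorphism of S₄. -/

import Mathlib

/-- The set of irreducible (complex) characters of a finite group `G`: the
characters of the simple objects of the category of finite-dimensional complex
representations of `G`. -/
def IrrChar (G : Type) [Group G] [Fintype G] : Type :=
  {χ : G → ℂ // ∃ V : FDRep ℂ G, CategoryTheory.Simple V ∧ χ = FDRep.character V}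

section Aux

open Equiv CategoryTheory

abbrev G4 := Equiv.Perm (Fin 4)

instance decIsConjG4 : DecidableRel (IsConj : G4 → G4 → Prop) :=
  fun _ _ => decidable_of_iff _ isConj_iff.symm

instance : DecidableEq (ConjClasses G4) := fun a b =>
  Quotient.recOnSubsingleton₂ a b fun x y =>
    decidable_of_iff (IsConj x y)
      (by rw [ConjClasses.quotient_mk_eq_mk, ConjClasses.quotient_mk_eq_mk,
            ConjClasses.mk_eq_mk_iff_isConj])

def pt : G4 := Equiv.swap 0 1
def pc : G4 := finRotate 4
def ka : G4 := Equiv.swap 0 1 * Equiv.swap 2 3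
def kb : G4 := Equiv.swap 0 2 * Equiv.swap 1 3
def kd : G4 := Equiv.swap 0 3 * Equiv.swap 1 2

lemma conjK : ∀ g : G4, ({g*ka*g⁻¹, g*kb*g⁻¹, g*kd*g⁻¹} : Multiset G4) = {ka, kb, kd} := by
  decide

lemma klein_mul : ka * kb = kd ∧ kb * ka = kd ∧ ka * kd = kb ∧ kd * ka = kb ∧ kb * kd = ka
    ∧ kd * kb = ka ∧ ka*ka = 1 ∧ kb*kb = 1 ∧ kd*kd = 1 := by decide

noncomputable section

variable (V : FDRep ℂ G4)

/-- The sum of the action of the Klein four subgroup. -/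
def Aop : V →ₗ[ℂ] V := V.ρ 1 + V.ρ ka + V.ρ kb + V.ρ kd

lemma Aop_comm (g : G4) : (V.ρ g) * (Aop V) = (Aop V) * (V.ρ g) := by
  have h1 : ∀ k : G4, V.ρ g * V.ρ k = V.ρ (g * k * g⁻¹) * V.ρ g := by
    intro k
    rw [← map_mul, ← map_mul]
    congr 1
    group
  have h2 : (Multiset.map (fun x => (V.ρ x : V →ₗ[ℂ] V)) {g*ka*g⁻¹, g*kb*g⁻¹, g*kd*g⁻¹}).sum
      = (Multiset.map (fun x => (V.ρ x : V →ₗ[ℂ] V)) {ka, kb, kd}).sum := by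
    rw [conjK g]
  simp only [Multiset.insert_eq_cons, Multiset.map_cons, Multiset.sum_cons,
    Multiset.map_singleton, Multiset.sum_singleton] at h2
  unfold Aop
  rw [mul_add, mul_add, mul_add, add_mul, add_mul, add_mul]
  rw [h1 ka, h1 kb, h1 kd, h1 1]
  rw [show g * 1 * g⁻¹ = (1:G4) by group]
  rw [← add_mul, ← add_mul, ← add_mul]
  simp only [add_assoc]
  rw [h2]
  simp only [add_mul]

/-- `Aop` as a morphism of representations. -/
def Sop : V ⟶ V where
  hom := FGModuleCat.ofHom (Aop V)
  comm g := by
    have := (Aop_comm V g).symm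
    apply FGModuleCat.hom_ext
    exact this

end

noncomputable section
open CategoryTheory

lemma char_isConj (V : FDRep ℂ G4) {x y : G4} (h : IsConj x y) :
    V.character x = V.character y := by
  obtain ⟨u, hu⟩ := isConj_iff.mp h
  rw [← hu, FDRep.char_conj]

/-- The key dichotomy: for a simple representation of `S₄`, the character value on a
4-cycle is plus or minus the value on a transposition. -/
lemma key (V : FDRep ℂ G4) [Simple V] :
    V.character pc = V.character pt ∨ V.character pc = - V.character pt := by
  obtain ⟨μ, hμ⟩ := CategoryTheory.endomorphism_simple_eq_smul_id ℂ (Sop V)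
  have hA : Aop V = μ • (1 : V →ₗ[ℂ] V) := by
    have := congrArg Action.Hom.hom hμ
    rw [Action.smul_hom, Action.id_hom] at this
    exact (congrArg (fun f => f.hom.hom) this).symm
  have hka : (V.ρ ka) * (Aop V) = Aop V := by
    unfold Aop
    rw [mul_add, mul_add, mul_add, ← map_mul, ← map_mul, ← map_mul, ← map_mul]
    rw [show ka * 1 = ka from mul_one ka, klein_mul.2.2.2.2.2.2.1, klein_mul.2.2.1,
      klein_mul.1]
    abel
  rw [hA] at hka
  have hid : (1 : V →ₗ[ℂ] V) ≠ 0 := by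
    intro h0
    apply CategoryTheory.id_nonzero V
    apply Action.hom_ext
    rw [Action.id_hom]
    apply FGModuleCat.hom_ext
    exact h0
  have hρka : μ • (V.ρ ka) = μ • (1 : V →ₗ[ℂ] V) := by
    calc μ • (V.ρ ka) = (V.ρ ka) * (μ • 1) := by
          rw [mul_smul_comm, mul_one]
      _ = μ • 1 := hka
  have hρkb : μ • (V.ρ kb) = μ • (1 : V →ₗ[ℂ] V) := by
    have hkb : (V.ρ kb) * (Aop V) = Aop V := by
      unfold Aop
      rw [mul_add, mul_add, mul_add, ← map_mul, ← map_mul, ← map_mul, ← map_mul]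
      rw [show kb * 1 = kb from mul_one kb, klein_mul.2.1, klein_mul.2.2.2.2.2.2.2.1,
        klein_mul.2.2.2.2.1]
      abel
    rw [hA] at hkb
    calc μ • (V.ρ kb) = (V.ρ kb) * (μ • 1) := by
          rw [mul_smul_comm, mul_one]
      _ = μ • 1 := hkb
  have hρkd : μ • (V.ρ kd) = μ • (1 : V →ₗ[ℂ] V) := by
    have hkd : (V.ρ kd) * (Aop V) = Aop V := by
      unfold Aop
      rw [mul_add, mul_add, mul_add, ← map_mul, ← map_mul, ← map_mul, ← map_mul]
      rw [show kd * 1 = kd from mul_one kd, klein_mul.2.2.2.1, klein_mul.2.2.2.2.2.1,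
        klein_mul.2.2.2.2.2.2.2.2]
      abel
    rw [hA] at hkd
    calc μ • (V.ρ kd) = (V.ρ kd) * (μ • 1) := by
          rw [mul_smul_comm, mul_one]
      _ = μ • 1 := hkd
  have hμ4 : μ * μ = 4 * μ := by
    have h1 : μ • Aop V = (4 * μ) • (1 : V →ₗ[ℂ] V) := by
      unfold Aop
      rw [smul_add, smul_add, smul_add, map_one, hρka, hρkb, hρkd]
      rw [show (4 : ℂ) * μ = μ + (μ + (μ + μ)) by ring]
      rw [add_smul, add_smul, add_smul]
      abel
    rw [hA, smul_smul] at h1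
    have h2 : (μ * μ - 4 * μ) • (1 : V →ₗ[ℂ] V) = 0 := by
      rw [sub_smul, h1, sub_self]
    rcases smul_eq_zero.mp h2 with h3 | h3
    · exact sub_eq_zero.mp h3
    · exact absurd h3 hid
  have e1 : (V.ρ pt) * Aop V = V.ρ pt + V.ρ (pt*ka) + V.ρ (pt*kb) + V.ρ (pt*kd) := by
    unfold Aop
    rw [mul_add, mul_add, mul_add, map_one, mul_one, ← map_mul, ← map_mul, ← map_mul]
  have e2 : (V.ρ pt) * Aop V = μ • V.ρ pt := by
    rw [hA, mul_smul_comm, mul_one]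
  have htr : V.character pt + V.character (pt*ka) + V.character (pt*kb)
      + V.character (pt*kd) = μ * V.character pt := by
    have h5 := congrArg (LinearMap.trace ℂ V) (e1.symm.trans e2)
    rw [map_add, map_add, map_add, map_smul, smul_eq_mul] at h5
    exact h5
  have c1 : V.character (pt*ka) = V.character pt := char_isConj V (by decide)
  have c2 : V.character (pt*kb) = V.character pc := char_isConj V (by decide)
  have c3 : V.character (pt*kd) = V.character pc := char_isConj V (by decide)
  rw [c1, c2, c3] at htr
  have hμ04 : μ = 0 ∨ μ = 4 := by
    rcases mul_eq_zero.mp (show μ * (μ - 4) = 0 by linear_combination hμ4) with h | h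
    · exact Or.inl h
    · exact Or.inr (sub_eq_zero.mp h)
  rcases hμ04 with h | h
  · subst h
    right
    linear_combination (1/2 : ℂ) * htr
  · subst h
    left
    linear_combination (1/2 : ℂ) * htr

def sgn (g : G4) : ℂ := ((Equiv.Perm.sign g : ℤ) : ℂ)

lemma sgn_mul (g h : G4) : sgn (g * h) = sgn g * sgn h := by
  unfold sgn
  rw [map_mul]
  push_cast
  rfl

lemma sgn_sq (g : G4) : sgn g * sgn g = 1 := by
  unfold sgn
  rcases Int.units_eq_one_or (Equiv.Perm.sign g) with h | h <;> rw [h] <;> norm_num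

lemma sgn_one : sgn 1 = 1 := by unfold sgn; rw [map_one]; norm_num

lemma sgn_isConj {x y : G4} (h : IsConj x y) : sgn x = sgn y := by
  obtain ⟨u, hu⟩ := isConj_iff.mp h
  unfold sgn
  rw [← hu]
  simp [map_mul]
  ring_nf
  rcases Int.units_eq_one_or (Equiv.Perm.sign u) with h1 | h1 <;> rw [h1] <;> norm_num

lemma sgn_pt : sgn pt = -1 := by
  unfold sgn
  rw [show Equiv.Perm.sign pt = -1 by decide]
  norm_num

lemma sgn_pc : sgn pc = -1 := by
  unfold sgn
  rw [show Equiv.Perm.sign pc = -1 by decide]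
  norm_num

lemma sgn_even {g : G4} (h1 : ¬ IsConj g pt) (h2 : ¬ IsConj g pc) : sgn g = 1 := by
  have h3 : ∀ g : G4, IsConj g pt ∨ IsConj g pc ∨ Equiv.Perm.sign g = 1 := by decide
  rcases h3 g with h | h | h
  · exact absurd h h1
  · exact absurd h h2
  · unfold sgn; rw [h]; norm_num

/-- Twist a representation by the sign character. -/
def twistRep (V : FDRep ℂ G4) : Representation ℂ G4 V where
  toFun g := sgn g • V.ρ g
  map_one' := by rw [sgn_one, map_one, one_smul]
  map_mul' g h := by
    rw [sgn_mul, map_mul, smul_mul_smul_comm]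

def twist (V : FDRep ℂ G4) : FDRep ℂ G4 := FDRep.of (twistRep V)

lemma twist_ρ (V : FDRep ℂ G4) (g : G4) : (twist V).ρ g = sgn g • V.ρ g := rfl

lemma char_twist (V : FDRep ℂ G4) (g : G4) :
    (twist V).character g = sgn g * V.character g := by
  show LinearMap.trace ℂ V ((twist V).ρ g) = _
  rw [twist_ρ, map_smul, smul_eq_mul]
  rfl

lemma twistAuxTo {A B : Type} [AddCommGroup A] [Module ℂ A] [AddCommGroup B] [Module ℂ B]
    (F : A →ₗ[ℂ] B) (a : A →ₗ[ℂ] A) (b : B →ₗ[ℂ] B) (c : ℂ) (hc : c * c = 1)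
    (h : F ∘ₗ a = (c • b) ∘ₗ F) : F ∘ₗ (c • a) = b ∘ₗ F := by
  rw [LinearMap.comp_smul, h, LinearMap.smul_comp, smul_smul, hc, one_smul]

lemma twistAuxFrom {A B : Type} [AddCommGroup A] [Module ℂ A] [AddCommGroup B] [Module ℂ B]
    (F : A →ₗ[ℂ] B) (a : A →ₗ[ℂ] A) (b : B →ₗ[ℂ] B) (c : ℂ) (hc : c * c = 1)
    (h : F ∘ₗ (c • a) = b ∘ₗ F) : F ∘ₗ a = (c • b) ∘ₗ F := by
  rw [LinearMap.smul_comp, ← h, LinearMap.comp_smul, smul_smul, hc, one_smul]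

def homTwistTo {X Y : FDRep ℂ G4} (f : X ⟶ twist Y) : twist X ⟶ Y where
  hom := f.hom
  comm g := by
    have h := f.comm g
    apply FGModuleCat.hom_ext
    have h' : f.hom.hom.hom ∘ₗ X.ρ g = (sgn g • Y.ρ g) ∘ₗ f.hom.hom.hom :=
      congrArg (fun m => m.hom.hom) h
    show f.hom.hom.hom ∘ₗ (sgn g • X.ρ g) = Y.ρ g ∘ₗ f.hom.hom.hom
    exact twistAuxTo (f.hom.hom.hom : X →ₗ[ℂ] Y) (X.ρ g) (Y.ρ g) (sgn g) (sgn_sq g) h'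

def homTwistFrom {X Y : FDRep ℂ G4} (f : twist X ⟶ Y) : X ⟶ twist Y where
  hom := f.hom
  comm g := by
    have h := f.comm g
    apply FGModuleCat.hom_ext
    have h' : f.hom.hom.hom ∘ₗ (sgn g • X.ρ g) = Y.ρ g ∘ₗ f.hom.hom.hom :=
      congrArg (fun m => m.hom.hom) h
    show f.hom.hom.hom ∘ₗ X.ρ g = (sgn g • Y.ρ g) ∘ₗ f.hom.hom.hom
    exact twistAuxFrom (f.hom.hom.hom : X →ₗ[ℂ] Y) (X.ρ g) (Y.ρ g) (sgn g) (sgn_sq g) h'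

lemma simple_twist (V : FDRep ℂ G4) (hV : CategoryTheory.Simple V) :
    CategoryTheory.Simple (twist V) := by
  constructor
  intro Y f hm
  let f' : twist Y ⟶ V := homTwistTo f
  have hmono : CategoryTheory.Mono f' := by
    constructor
    intro Z u v huv
    have h1 : (homTwistTo u) ≫ f = (homTwistTo v) ≫ f := by
      apply Action.hom_ext
      have := congrArg Action.Hom.hom huv
      exact this
    have h2 := (CategoryTheory.Mono.right_cancellation (f := f) _ _ h1)
    have h3 := congrArg Action.Hom.hom h2
    apply Action.hom_ext
    exact h3
  constructor
  · intro hiso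
    have hiso' : CategoryTheory.IsIso f' := by
      refine ⟨homTwistFrom (CategoryTheory.inv f), ?_, ?_⟩
      · apply Action.hom_ext
        have := congrArg Action.Hom.hom (CategoryTheory.IsIso.hom_inv_id f)
        exact this
      · apply Action.hom_ext
        have := congrArg Action.Hom.hom (CategoryTheory.IsIso.inv_hom_id f)
        exact this
    have hne := (hV.mono_isIso_iff_nonzero f').mp hiso'
    intro h0
    apply hne
    apply Action.hom_ext
    have := congrArg Action.Hom.hom h0
    exact this
  · intro hne
    have hne' : f' ≠ 0 := by
      intro h0
      apply hne
      apply Action.hom_ext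
      have := congrArg Action.Hom.hom h0
      exact this
    have hiso' := (hV.mono_isIso_iff_nonzero f').mpr hne'
    refine ⟨homTwistTo (CategoryTheory.inv f'), ?_, ?_⟩
    · apply Action.hom_ext
      have := congrArg Action.Hom.hom (CategoryTheory.IsIso.hom_inv_id f')
      exact this
    · apply Action.hom_ext
      have := congrArg Action.Hom.hom (CategoryTheory.IsIso.inv_hom_id f')
      exact this

lemma irr_isConj (χ : IrrChar G4) {x y : G4} (h : IsConj x y) : χ.1 x = χ.1 y := by
  obtain ⟨V, _, he⟩ := χ.2
  rw [he]
  exact char_isConj V h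

lemma irr_key (χ : IrrChar G4) : χ.1 pc = χ.1 pt ∨ χ.1 pc = - χ.1 pt := by
  obtain ⟨V, hs, he⟩ := χ.2
  rw [he]
  haveI := hs
  exact key V

/-- Multiplication by the sign character preserves irreducibility. -/
def sgnChar (χ : IrrChar G4) : IrrChar G4 :=
  ⟨fun g => sgn g * χ.1 g, by
    obtain ⟨V, hs, he⟩ := χ.2
    exact ⟨twist V, simple_twist V hs, funext fun g => by rw [char_twist, ← he]⟩⟩

open scoped Classical in
/-- The character-table automorphism on irreducible characters. -/
noncomputable def beta (χ : IrrChar G4) : IrrChar G4 :=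
  if χ.1 pt = χ.1 pc then χ else sgnChar χ

lemma beta_invol : Function.Involutive beta := by
  intro χ
  by_cases h : χ.1 pt = χ.1 pc
  · have hb : beta χ = χ := by rw [beta, if_pos h]
    rw [hb, hb]
  · have h2 : (sgnChar χ).1 pt ≠ (sgnChar χ).1 pc := by
      show ¬ sgn pt * χ.1 pt = sgn pc * χ.1 pc
      rw [sgn_pt, sgn_pc]
      intro h3
      exact h (by linear_combination -h3)
    have hb : beta χ = sgnChar χ := by rw [beta, if_neg h]
    rw [hb, beta, if_neg h2]
    apply Subtype.ext
    funext g
    show sgn g * (sgn g * χ.1 g) = χ.1 g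
    rw [← mul_assoc, sgn_sq, one_mul]

end

end Aux

/-!
STATEMENT 17: There is an automorphism of the character table of the symmetric
group `S₄` that does not correspond to any group automorphism: there exist a
bijection `α` of the set of conjugacy classes of `S₄` and a bijection `β` of
the set of irreducible complex characters of `S₄` with
`β χ (α C) = χ C` for all `χ`, `C`, such that `α` maps the class `2A` of a
transposition to the class `4A` of a 4-cycle; in particular `α` is not induced
by any automorphism of `S₄`.
-/
theorem stmt17 :
    ∃ (α : ConjClasses (Equiv.Perm (Fin 4)) ≃ ConjClasses (Equiv.Perm (Fin 4)))
      (β : IrrChar (Equiv.Perm (Fin 4)) ≃ IrrChar (Equiv.Perm (Fin 4))),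
      (∀ (χ : IrrChar (Equiv.Perm (Fin 4))) (g h : Equiv.Perm (Fin 4)),
        α (ConjClasses.mk g) = ConjClasses.mk h → (β χ).1 h = χ.1 g) ∧
      α (ConjClasses.mk (Equiv.swap (0 : Fin 4) 1)) =
        ConjClasses.mk (finRotate 4) ∧
      ∀ f : Equiv.Perm (Fin 4) ≃* Equiv.Perm (Fin 4),
        ¬ ∀ g : Equiv.Perm (Fin 4),
            α (ConjClasses.mk g) = ConjClasses.mk (f g) := by
  refine ⟨Equiv.swap (ConjClasses.mk pt) (ConjClasses.mk pc),
    Function.Involutive.toPerm beta beta_invol, ?_, ?_, ?_⟩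
  · intro χ g h hgh
    show (beta χ).1 h = χ.1 g
    by_cases h1 : ConjClasses.mk g = ConjClasses.mk pt
    · rw [h1, Equiv.swap_apply_left] at hgh
      have hch : IsConj pc h := ConjClasses.mk_eq_mk_iff_isConj.mp hgh
      have hgt : IsConj g pt := ConjClasses.mk_eq_mk_iff_isConj.mp h1
      by_cases hχ : χ.1 pt = χ.1 pc
      · have hb : beta χ = χ := by rw [beta, if_pos hχ]
        rw [hb, ← irr_isConj χ hch, ← hχ, irr_isConj χ hgt]
      · have hb : beta χ = sgnChar χ := by rw [beta, if_neg hχ]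
        rw [hb]
        show sgn h * χ.1 h = χ.1 g
        have hkey : χ.1 pc = - χ.1 pt := by
          rcases irr_key χ with hk | hk
          · exact absurd hk.symm hχ
          · exact hk
        rw [← sgn_isConj hch, ← irr_isConj χ hch, sgn_pc, hkey, irr_isConj χ hgt]
        ring
    · by_cases h2 : ConjClasses.mk g = ConjClasses.mk pc
      · rw [h2, Equiv.swap_apply_right] at hgh
        have hth : IsConj pt h := ConjClasses.mk_eq_mk_iff_isConj.mp hgh
        have hgc : IsConj g pc := ConjClasses.mk_eq_mk_iff_isConj.mp h2
        by_cases hχ : χ.1 pt = χ.1 pc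
        · have hb : beta χ = χ := by rw [beta, if_pos hχ]
          rw [hb, ← irr_isConj χ hth, hχ, irr_isConj χ hgc]
        · have hb : beta χ = sgnChar χ := by rw [beta, if_neg hχ]
          rw [hb]
          show sgn h * χ.1 h = χ.1 g
          have hkey : χ.1 pc = - χ.1 pt := by
            rcases irr_key χ with hk | hk
            · exact absurd hk.symm hχ
            · exact hk
          rw [← sgn_isConj hth, ← irr_isConj χ hth, sgn_pt, irr_isConj χ hgc, hkey]
          ring
      · rw [Equiv.swap_apply_of_ne_of_ne h1 h2] at hgh
        have hgh' : IsConj g h := ConjClasses.mk_eq_mk_iff_isConj.mp hgh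
        have hnt : ¬ IsConj g pt := fun hc => h1 (ConjClasses.mk_eq_mk_iff_isConj.mpr hc)
        have hnc : ¬ IsConj g pc := fun hc => h2 (ConjClasses.mk_eq_mk_iff_isConj.mpr hc)
        by_cases hχ : χ.1 pt = χ.1 pc
        · have hb : beta χ = χ := by rw [beta, if_pos hχ]
          rw [hb, ← irr_isConj χ hgh']
        · have hb : beta χ = sgnChar χ := by rw [beta, if_neg hχ]
          rw [hb]
          show sgn h * χ.1 h = χ.1 g
          rw [← sgn_isConj hgh', ← irr_isConj χ hgh', sgn_even hnt hnc, one_mul]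
  · show Equiv.swap (ConjClasses.mk pt) (ConjClasses.mk pc) (ConjClasses.mk pt)
        = ConjClasses.mk pc
    exact Equiv.swap_apply_left _ _
  · intro f hf
    have h := hf pt
    have h2 : Equiv.swap (ConjClasses.mk pt) (ConjClasses.mk pc) (ConjClasses.mk pt)
        = ConjClasses.mk pc := Equiv.swap_apply_left _ _
    rw [h2] at h
    have h3 : IsConj pc (f pt) := ConjClasses.mk_eq_mk_iff_isConj.mp h
    obtain ⟨u, hu⟩ := isConj_iff.mp h3
    have h4 : f pt * f pt = 1 := by
      rw [← map_mul, show pt * pt = (1 : G4) by decide, map_one]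
    have h5 : pc * pc = 1 := by
      have h6 : pc * pc = u⁻¹ * (f pt * f pt) * u := by rw [← hu]; group
      rw [h6, h4]
      group
    exact (by decide : pc * pc ≠ (1 : G4)) h5
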